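/- Let K be a field and A a small delta category, i.e., a skeletal category in which the only endomorphisms are the identities. Then the K-linearization K[A] admits a separability family if and only if A is a discrete category, i.e., every morphism of A is an identity morphism. -/

import Mathlib

open CategoryTheory TensorProduct

/-- Composition as a `K`-linear map out of the tensor product of Hom spaces:
`h ⊗ k ↦ h ∘ k = k ≫ h`. -/
noncomputable def compMap (K : Type*) [Field K] {C : Type*} [Category C] [Preadditive C]
    [Linear K C] (X Y Z : C) : ((Z ⟶ X) ⊗[K] (Y ⟶ Z)) →ₗ[K] (Y ⟶ X) :=
  TensorProduct.lift (LinearMap.mk₂ K (fun (h : Z ⟶ X) (k : Y ⟶ Z) => k ≫ h)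
    (fun h h' k => by simp) (fun r h k => by simp)
    (fun h k k' => by simp) (fun r h k => by simp))

/-- A separability family for a `K`-linear category `C`. -/
structure SeparabilityFamily (K : Type*) [Field K] (C : Type*) [Category C] [Preadditive C]
    [Linear K C] where
  a : ∀ x y : C, (y ⟶ x) ⊗[K] (x ⟶ y)
  finite_support : ∀ x : C, {y : C | a x y ≠ 0}.Finite
  sum_comp : ∀ x : C, (∑ᶠ y : C, compMap K x x y (a x y)) = 𝟙 x
  compat : ∀ {x z : C} (f : x ⟶ z) (y : C),
    LinearMap.rTensor (x ⟶ y) (Linear.rightComp K y f) (a x y)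
      = LinearMap.lTensor (y ⟶ z) (Linear.leftComp K y f) (a z y)

namespace FreeSep

lemma tensor_zero_left {K M N : Type*} [Field K] [AddCommMonoid M] [AddCommMonoid N]
    [Module K M] [Module K N] (h : ∀ m : M, m = 0) (t : M ⊗[K] N) : t = 0 := by
  have hid : (LinearMap.id : M →ₗ[K] M) = 0 := LinearMap.ext fun m => by rw [h m]; simp
  calc t = LinearMap.rTensor N LinearMap.id t := by rw [LinearMap.rTensor_id]; rfl
    _ = 0 := by rw [hid, LinearMap.rTensor_zero]; rfl

lemma tensor_zero_right {K M N : Type*} [Field K] [AddCommMonoid M] [AddCommMonoid N]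
    [Module K M] [Module K N] (h : ∀ n : N, n = 0) (t : M ⊗[K] N) : t = 0 := by
  have hid : (LinearMap.id : N →ₗ[K] N) = 0 := LinearMap.ext fun n => by rw [h n]; simp
  calc t = LinearMap.lTensor M LinearMap.id t := by rw [LinearMap.lTensor_id]; rfl
    _ = 0 := by rw [hid, LinearMap.lTensor_zero]; rfl

variable (K : Type*) [Field K] {A : Type*} [SmallCategory A]

/-- Every morphism of the linearization out of an empty Hom-set is zero. -/
lemma hom_eq_zero {x y : A} (h : IsEmpty (x ⟶ y))
    (g : (Free.of K x) ⟶ (Free.of K y)) : g = 0 := by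
  have : (g : (x ⟶ y) →₀ K) = 0 := Finsupp.ext fun f => h.elim f
  exact this

/-- Coefficient extraction as a linear functional. -/
noncomputable def coeff {x z : A} (f : x ⟶ z) :
    ((Free.of K x) ⟶ (Free.of K z)) →ₗ[K] K where
  toFun g := (show (x ⟶ z) →₀ K from g) f
  map_add' _ _ := rfl
  map_smul' _ _ := rfl

lemma coeff_single {x z : A} (f : x ⟶ z) (r : K) :
    coeff K f (show (Free.of K x) ⟶ (Free.of K z) from Finsupp.single f r) = r := by
  show (Finsupp.single f r : (x ⟶ z) →₀ K) f = r
  simp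

lemma coeff_id (x : A) : coeff K (𝟙 x) (𝟙 (Free.of K x)) = 1 :=
  coeff_single K (𝟙 x) 1

lemma coeff_embedding {x z : A} (f : x ⟶ z) :
    coeff K f ((Free.embedding K A).map f) = 1 :=
  coeff_single K f 1

/-- Pair-coefficient functional on a tensor product of Hom spaces. -/
noncomputable def pairCoeff {x z x' z' : A} (f : x ⟶ z) (g : x' ⟶ z') :
    (((Free.of K x) ⟶ (Free.of K z)) ⊗[K] ((Free.of K x') ⟶ (Free.of K z'))) →ₗ[K] K :=
  TensorProduct.lift (LinearMap.mk₂ K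
    (fun u v => coeff K f u * coeff K g v)
    (fun u u' v => by simp [add_mul]) (fun r u v => by simp [mul_assoc])
    (fun u v v' => by simp [mul_add]) (fun r u v => by simp; ring))

lemma pairCoeff_tmul {x z x' z' : A} (f : x ⟶ z) (g : x' ⟶ z')
    (u : (Free.of K x) ⟶ (Free.of K z)) (v : (Free.of K x') ⟶ (Free.of K z')) :
    pairCoeff K f g (u ⊗ₜ v) = coeff K f u * coeff K g v := rfl

lemma endo_scalar (x : A) (hx : ∀ f : x ⟶ x, f = 𝟙 x)
    (g : (Free.of K x) ⟶ (Free.of K x)) :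
    ∃ c : K, g = c • 𝟙 (Free.of K x) := by
  refine ⟨(show (x ⟶ x) →₀ K from g) (𝟙 x), ?_⟩
  show (show (x ⟶ x) →₀ K from g)
      = ((show (x ⟶ x) →₀ K from g) (𝟙 x)) • Finsupp.single (𝟙 x) 1
  ext f
  rw [hx f]
  erw [Finsupp.smul_apply]
  simp

lemma tensor_scalar (x : A) (hx : ∀ f : x ⟶ x, f = 𝟙 x)
    (t : ((Free.of K x) ⟶ (Free.of K x)) ⊗[K] ((Free.of K x) ⟶ (Free.of K x))) :
    ∃ c : K, t = c • (𝟙 (Free.of K x) ⊗ₜ[K] 𝟙 (Free.of K x)) := by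
  induction t using TensorProduct.induction_on with
  | zero => exact ⟨0, by simp⟩
  | tmul g h =>
    obtain ⟨c, rfl⟩ := endo_scalar K x hx g
    obtain ⟨d, rfl⟩ := endo_scalar K x hx h
    exact ⟨c * d, by rw [TensorProduct.smul_tmul_smul]⟩
  | add t s ht hs =>
    obtain ⟨c, rfl⟩ := ht
    obtain ⟨d, rfl⟩ := hs
    exact ⟨c + d, (add_smul c d _).symm⟩

lemma compMap_tmul {K : Type*} [Field K] {C : Type*} [Category C] [Preadditive C]
    [Linear K C] (X Y Z : C) (h : Z ⟶ X) (k : Y ⟶ Z) :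
    compMap K X Y Z (h ⊗ₜ k) = k ≫ h := rfl

open scoped Classical in
/-- The candidate separability family for the linearization of a discrete category. -/
noncomputable def fam : ∀ x y : A,
    ((Free.of K y) ⟶ (Free.of K x)) ⊗[K] ((Free.of K x) ⟶ (Free.of K y)) :=
  fun x y =>
    if h : x = y then
      (eqToHom (congrArg (Free.of K) h.symm)) ⊗ₜ (eqToHom (congrArg (Free.of K) h))
    else 0

lemma fam_self (x : A) :
    fam K x x = (𝟙 (Free.of K x)) ⊗ₜ[K] (𝟙 (Free.of K x)) := by
  rw [fam, dif_pos rfl]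
  simp

lemma fam_ne {x y : A} (h : x ≠ y) : fam K x y = 0 := by
  rw [fam, dif_neg h]

variable {K}

lemma mutual_empty (hskel : Skeletal A) (hdelta : ∀ (x : A) (f : x ⟶ x), f = 𝟙 x)
    {x y : A} (h : x ≠ y) : IsEmpty (x ⟶ y) ∨ IsEmpty (y ⟶ x) := by
  by_cases h1 : Nonempty (y ⟶ x)
  · exact Or.inl ⟨fun k => h (hskel ⟨⟨k, h1.some, hdelta _ _, hdelta _ _⟩⟩)⟩
  · exact Or.inr (not_nonempty_iff.mp h1)

lemma fam_sum_comp (x : A) :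
    (∑ᶠ y : A, compMap K (Free.of K x) (Free.of K x) (Free.of K y) (fam K x y))
      = 𝟙 (Free.of K x) := by
  rw [finsum_eq_single
    (fun y : A => compMap K (Free.of K x) (Free.of K x) (Free.of K y) (fam K x y)) x
    (fun y hy => by simp only [fam_ne K (Ne.symm hy)]; simp)]
  rw [fam_self, compMap_tmul]
  simp

lemma fam_compat (hd : ∀ (x y : A) (f : x ⟶ y), ∃ h : x = y, f = eqToHom h)
    {x z : A} (f : (Free.of K x) ⟶ (Free.of K z)) (y : A) :
    LinearMap.rTensor ((Free.of K x) ⟶ (Free.of K y))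
        (Linear.rightComp K (Free.of K y) f) (fam K x y)
      = LinearMap.lTensor ((Free.of K y) ⟶ (Free.of K z))
        (Linear.leftComp K (Free.of K y) f) (fam K z y) := by
  by_cases hxz : x = z
  · subst hxz
    by_cases hyx : x = y
    · subst hyx
      rw [fam_self, LinearMap.rTensor_tmul, LinearMap.lTensor_tmul]
      have hend : ∀ g : x ⟶ x, g = 𝟙 x := fun g => by
        obtain ⟨_, rfl⟩ := hd x x g; rfl
      obtain ⟨c, rfl⟩ := endo_scalar K x hend f
      rw [Linear.rightComp_apply, Linear.leftComp_apply, Category.id_comp,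
        Category.comp_id]
      rw [TensorProduct.smul_tmul, TensorProduct.tmul_smul]
    · rw [fam_ne K hyx, map_zero, map_zero]
  · have hfe : IsEmpty (x ⟶ z) := ⟨fun g => hxz (hd x z g).choose⟩
    rw [hom_eq_zero K hfe f]
    have h1 : Linear.rightComp K (Free.of K y) (0 : (Free.of K x) ⟶ (Free.of K z)) = 0 :=
      LinearMap.ext fun g => by simp
    have h2 : Linear.leftComp K (Free.of K y) (0 : (Free.of K x) ⟶ (Free.of K z)) = 0 :=
      LinearMap.ext fun g => by simp
    rw [h1, h2, LinearMap.rTensor_zero, LinearMap.lTensor_zero]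
    simp

end FreeSep

open FreeSep in
/-- For a delta category `A` (skeletal, and all endomorphisms are identities), the
linearization `K[A]` is separable iff `A` is discrete (every morphism is an identity). -/
theorem free_delta_separable_iff_discrete (K : Type*) [Field K]
    (A : Type*) [SmallCategory A]
    (hskel : Skeletal A)
    (hdelta : ∀ (x : A) (f : x ⟶ x), f = 𝟙 x) :
    Nonempty (SeparabilityFamily K (Free K A)) ↔
      ∀ (x y : A) (f : x ⟶ y), ∃ h : x = y, f = eqToHom h := by
  constructor
  · rintro ⟨S⟩ x z f
    by_cases hxz : x = z
    · subst hxz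
      exact ⟨rfl, by rw [hdelta x f]; rfl⟩
    · exfalso
      -- There is no morphism `z ⟶ x` in `A`.
      have hzx : IsEmpty (z ⟶ x) :=
        ⟨fun g => hxz (hskel ⟨⟨f, g, hdelta _ _, hdelta _ _⟩⟩)⟩
      -- For `y ≠ x`, the element `a x y` vanishes.
      have key : ∀ y : Free K A, y ≠ Free.of K x →
          compMap K (Free.of K x) (Free.of K x) y (S.a (Free.of K x) y) = 0 := by
        intro y hy
        have hy' : ¬ ((x : A) = (y : A)) := fun h => hy (congrArg (Free.of K) h).symm
        have hzero : S.a (Free.of K x) y = 0 := by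
          rcases mutual_empty hskel hdelta hy' with h | h
          · exact tensor_zero_right (fun m => hom_eq_zero (A := A) K h m) _
          · exact tensor_zero_left (fun m => hom_eq_zero (A := A) K h m) _
        rw [hzero]
        simp
      have hsum := S.sum_comp (Free.of K x)
      rw [finsum_eq_single
        (fun y : Free K A => compMap K (Free.of K x) (Free.of K x) y (S.a (Free.of K x) y))
        (Free.of K x) key] at hsum
      obtain ⟨c, hc⟩ := tensor_scalar (A := A) K x (hdelta x) (S.a (Free.of K x) (Free.of K x))
      rw [hc, map_smul, compMap_tmul, Category.id_comp] at hsum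
      -- From `sum_comp` we get `c = 1`.
      have hc1 : c = 1 := by
        have h := congrArg (coeff (A := A) K (𝟙 x)) hsum
        rw [map_smul, coeff_id] at h
        simpa using h
      -- From `compat` applied to the image of `f`, we get `c = 0`.
      set fK : (Free.of K x) ⟶ (Free.of K z) :=
        (show (Free.of K x) ⟶ (Free.of K z) from Finsupp.single f 1) with hfK
      have hcom := S.compat fK (Free.of K x)
      have haz : S.a (Free.of K z) (Free.of K x) = 0 :=
        tensor_zero_right (fun m => hom_eq_zero (A := A) K hzx m) _
      rw [haz, map_zero, hc, map_smul, LinearMap.rTensor_tmul] at hcom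
      have hid : (Linear.rightComp K (Free.of K x) fK) (𝟙 (Free.of K x)) = fK := by
        rw [Linear.rightComp_apply, Category.id_comp]
      rw [hid] at hcom
      have hval := congrArg (pairCoeff (A := A) K f (𝟙 x)) hcom
      rw [map_smul, map_zero, pairCoeff_tmul, coeff_id, hfK, coeff_single] at hval
      have hc0 : c = 0 := by simpa using hval
      rw [hc0] at hc1
      exact zero_ne_one hc1
  · intro hd
    refine ⟨⟨fun x y => fam (A := A) K x y, ?_, ?_, ?_⟩⟩
    · intro x
      refine Set.Finite.subset (Set.finite_singleton x) ?_
      intro y hy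
      by_contra hxy
      exact hy (fam_ne K (fun h : (x : A) = y => hxy (congrArg (Free.of K) h).symm))
    · intro x
      exact fam_sum_comp (K := K) (A := A) x
    · intro x z f y
      exact fam_compat hd f y
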